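/- Suppose v : ℝⁿ → ℝⁿ satisfies ‖Dv(x) − Dv(z)‖ ≤ H_v‖x − z‖ for all x, z, and fix block structure x = (x_1,…,x_m). Suppose additionally the block Dv_{j,i}(x) := ∇_{x_i} v_j(x) satisfies Dv_{j,i}(x) = Dv_{i,j}(x)^T (symmetry of the Hessian), v_j depends only on blocks in I_j, and v_i depends only on blocks in I_i. Then for all x, z: ‖∇_{x_i} v_j(x) − ∇_{z_i} v_j(z)‖ ≤ H_v · Σ_{l ∈ I_i ∩ I_j} ‖x_l − z_l‖. -/

import Mathlib

/-- The `(j, i)` block of the Jacobian of a vector field on a product of Euclidean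
spaces (the product equipped with the l2 norm). -/
noncomputable def blockDeriv {m : ℕ} {d : Fin m → ℕ}
    (v : PiLp 2 (fun j : Fin m => EuclideanSpace ℝ (Fin (d j))) →
         PiLp 2 (fun j : Fin m => EuclideanSpace ℝ (Fin (d j))))
    (j i : Fin m) (x : PiLp 2 (fun j : Fin m => EuclideanSpace ℝ (Fin (d j)))) :
    EuclideanSpace ℝ (Fin (d i)) →L[ℝ] EuclideanSpace ℝ (Fin (d j)) :=
  ((ContinuousLinearMap.proj (R := ℝ) (φ := fun k : Fin m => EuclideanSpace ℝ (Fin (d k))) j).comp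
      (PiLp.continuousLinearEquiv 2 ℝ
        (β := fun k : Fin m => EuclideanSpace ℝ (Fin (d k)))).toContinuousLinearMap).comp
    ((fderiv ℝ v x).comp
      (((PiLp.continuousLinearEquiv 2 ℝ
          (β := fun k : Fin m => EuclideanSpace ℝ (Fin (d k)))).symm.toContinuousLinearMap).comp
        (LinearMap.toContinuousLinearMap
          (LinearMap.single ℝ (fun k : Fin m => EuclideanSpace ℝ (Fin (d k))) i))))

section Aux

lemma fderiv_translate {E F : Type*} [NormedAddCommGroup E] [NormedSpace ℝ E]
    [NormedAddCommGroup F] [NormedSpace ℝ F] (g : E → F) (hg : Differentiable ℝ g)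
    (c : E) (h : ∀ y, g (y + c) = g y) (x : E) :
    fderiv ℝ g (x + c) = fderiv ℝ g x := by
  have h1 : HasFDerivAt (fun y => g (y + c)) ((fderiv ℝ g (x + c)).comp
      (ContinuousLinearMap.id ℝ E)) x :=
    ((hg (x + c)).hasFDerivAt).comp x ((hasFDerivAt_id x).add_const c)
  have h2 : (fun y => g (y + c)) = g := funext h
  rw [h2, ContinuousLinearMap.comp_id] at h1
  exact (h1.fderiv).symm

variable {m : ℕ} {d : Fin m → ℕ}
  (v : PiLp 2 (fun j : Fin m => EuclideanSpace ℝ (Fin (d j))) →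
       PiLp 2 (fun j : Fin m => EuclideanSpace ℝ (Fin (d j))))

/-- `v y j` seen as a function, as image under a CLM. -/
noncomputable def Lj (j : Fin m) :
    PiLp 2 (fun k : Fin m => EuclideanSpace ℝ (Fin (d k))) →L[ℝ] EuclideanSpace ℝ (Fin (d j)) :=
  (ContinuousLinearMap.proj (R := ℝ) (φ := fun k : Fin m => EuclideanSpace ℝ (Fin (d k))) j).comp
    (PiLp.continuousLinearEquiv 2 ℝ
      (β := fun k : Fin m => EuclideanSpace ℝ (Fin (d k)))).toContinuousLinearMap

noncomputable def inc (i : Fin m) :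
    EuclideanSpace ℝ (Fin (d i)) →L[ℝ] PiLp 2 (fun k : Fin m => EuclideanSpace ℝ (Fin (d k))) :=
  (((PiLp.continuousLinearEquiv 2 ℝ
      (β := fun k : Fin m => EuclideanSpace ℝ (Fin (d k)))).symm.toContinuousLinearMap).comp
    (LinearMap.toContinuousLinearMap
      (LinearMap.single ℝ (fun k : Fin m => EuclideanSpace ℝ (Fin (d k))) i)))

lemma blockDeriv_eq (hv : Differentiable ℝ v) (j i : Fin m)
    (x : PiLp 2 (fun k : Fin m => EuclideanSpace ℝ (Fin (d k)))) :
    blockDeriv v j i x = (fderiv ℝ (fun y => Lj (d := d) j (v y)) x).comp (inc (d := d) i) := by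
  have : fderiv ℝ (fun y => Lj (d := d) j (v y)) x = (Lj (d := d) j).comp (fderiv ℝ v x) :=
    (((Lj (d := d) j).hasFDerivAt).comp x (hv x).hasFDerivAt).fderiv
  rw [this]
  rfl

lemma Lj_apply (j : Fin m) (y : PiLp 2 (fun k : Fin m => EuclideanSpace ℝ (Fin (d k)))) :
    Lj (d := d) j y = y j := rfl

lemma norm_Lj_apply_le (j : Fin m) (y : PiLp 2 (fun k : Fin m => EuclideanSpace ℝ (Fin (d k)))) :
    ‖Lj (d := d) j y‖ ≤ ‖y‖ := by
  rw [Lj_apply]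
  have h := PiLp.norm_eq_of_L2 y
  have h1 : ‖y j‖ ^ 2 ≤ ∑ k, ‖y k‖ ^ 2 :=
    Finset.single_le_sum (fun k _ => sq_nonneg ‖y k‖) (Finset.mem_univ j)
  calc ‖y j‖ = Real.sqrt (‖y j‖ ^ 2) := (Real.sqrt_sq (norm_nonneg _)).symm
    _ ≤ Real.sqrt (∑ k, ‖y k‖ ^ 2) := Real.sqrt_le_sqrt h1
    _ = ‖y‖ := h.symm

lemma norm_inc_apply (i : Fin m) (u : EuclideanSpace ℝ (Fin (d i))) :
    ‖inc (d := d) i u‖ = ‖u‖ := by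
  have : inc (d := d) i u
      = (WithLp.equiv 2 (∀ k, EuclideanSpace ℝ (Fin (d k)))).symm (Pi.single i u) := rfl
  rw [this, WithLp.equiv_symm_apply]; exact PiLp.norm_single 2 (fun k => EuclideanSpace ℝ (Fin (d k))) i u

end Aux

section Main
variable {m : ℕ} {d : Fin m → ℕ}
  {v : PiLp 2 (fun j : Fin m => EuclideanSpace ℝ (Fin (d j))) →
       PiLp 2 (fun j : Fin m => EuclideanSpace ℝ (Fin (d j)))}

/-- If `v · j` only depends on coordinates in `S`, then `blockDeriv v j i` is unchanged
when moving between points agreeing on `S`. -/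
lemma blockDeriv_congr (hv : Differentiable ℝ v) (S : Finset (Fin m)) (j : Fin m)
    (hdepj : ∀ x y, (∀ l ∈ S, x l = y l) → v x j = v y j) (i : Fin m)
    (a b : PiLp 2 (fun k : Fin m => EuclideanSpace ℝ (Fin (d k))))
    (hab : ∀ l ∈ S, a l = b l) :
    blockDeriv v j i a = blockDeriv v j i b := by
  rw [blockDeriv_eq v hv, blockDeriv_eq v hv]
  have hgdiff : Differentiable ℝ (fun y => Lj (d := d) j (v y)) :=
    fun y => ((Lj (d := d) j).differentiableAt).comp y (hv y)
  have key : fderiv ℝ (fun y => Lj (d := d) j (v y)) a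
      = fderiv ℝ (fun y => Lj (d := d) j (v y)) b := by
    have hinv : ∀ y, (fun y => Lj (d := d) j (v y)) (y + (a - b)) =
        (fun y => Lj (d := d) j (v y)) y := by
      intro y
      simp only [Lj_apply]
      apply hdepj
      intro l hl
      have : (a - b) l = a l - b l := rfl
      show (y + (a - b)) l = y l
      have h2 : (y + (a - b)) l = y l + (a l - b l) := rfl
      rw [h2, hab l hl, sub_self, add_zero]
    have := fderiv_translate (fun y => Lj (d := d) j (v y)) hgdiff (a - b) hinv b
    simpa using this
  rw [key]

lemma norm_blockDeriv_sub_le (hv : Differentiable ℝ v) (j i : Fin m)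
    (a b : PiLp 2 (fun k : Fin m => EuclideanSpace ℝ (Fin (d k)))) :
    ‖blockDeriv v j i a - blockDeriv v j i b‖ ≤ ‖fderiv ℝ v a - fderiv ℝ v b‖ := by
  apply ContinuousLinearMap.opNorm_le_bound _ (norm_nonneg _)
  intro u
  have heq : (blockDeriv v j i a - blockDeriv v j i b) u
      = Lj (d := d) j ((fderiv ℝ v a - fderiv ℝ v b) (inc (d := d) i u)) := by
    show blockDeriv v j i a u - blockDeriv v j i b u = _
    rfl
  rw [heq]
  calc ‖Lj (d := d) j ((fderiv ℝ v a - fderiv ℝ v b) (inc (d := d) i u))‖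
      ≤ ‖(fderiv ℝ v a - fderiv ℝ v b) (inc (d := d) i u)‖ := norm_Lj_apply_le _ _
    _ ≤ ‖fderiv ℝ v a - fderiv ℝ v b‖ * ‖inc (d := d) i u‖ :=
        ContinuousLinearMap.le_opNorm _ _
    _ = ‖fderiv ℝ v a - fderiv ℝ v b‖ * ‖u‖ := by rw [norm_inc_apply]

end Main

theorem stmt13 {m : ℕ} (d : Fin m → ℕ)
    (v : PiLp 2 (fun j : Fin m => EuclideanSpace ℝ (Fin (d j))) →
         PiLp 2 (fun j : Fin m => EuclideanSpace ℝ (Fin (d j))))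
    (hv : ContDiff ℝ 1 v) (Hv : ℝ) (hHv : 0 < Hv)
    (hLip : ∀ x z, ‖fderiv ℝ v x - fderiv ℝ v z‖ ≤ Hv * ‖x - z‖)
    (I : Fin m → Finset (Fin m)) (hI : ∀ j, j ∈ I j)
    (hsymm : ∀ x i j, ContinuousLinearMap.adjoint (blockDeriv v i j x) = blockDeriv v j i x)
    (hdep : ∀ j, ∀ x y, (∀ l ∈ I j, x l = y l) → v x j = v y j) :
    ∀ x z i j, ‖blockDeriv v j i x - blockDeriv v j i z‖
      ≤ Hv * ∑ l ∈ I i ∩ I j, ‖x l - z l‖ := by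
  intro x z i j
  have hvd : Differentiable ℝ v := hv.differentiable one_ne_zero
  set S : Finset (Fin m) := I i ∩ I j with hS
  set x' : PiLp 2 (fun k : Fin m => EuclideanSpace ℝ (Fin (d k))) :=
    WithLp.toLp 2 (fun l => if l ∈ S then x l else z l) with hx'
  set x'' : PiLp 2 (fun k : Fin m => EuclideanSpace ℝ (Fin (d k))) :=
    WithLp.toLp 2 (fun l => if l ∈ I j then x l else z l) with hx''
  have h1 : blockDeriv v j i x = blockDeriv v j i x'' := by
    refine blockDeriv_congr hvd (I j) j (hdep j) i x x'' (fun l hl => ?_)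
    show x l = if l ∈ I j then x l else z l
    rw [if_pos hl]
  have h2 : blockDeriv v i j x'' = blockDeriv v i j x' := by
    refine blockDeriv_congr hvd (I i) i (hdep i) j x'' x' (fun l hl => ?_)
    show (if l ∈ I j then x l else z l) = if l ∈ S then x l else z l
    by_cases hlj : l ∈ I j
    · rw [if_pos hlj, if_pos (by rw [hS]; exact Finset.mem_inter.2 ⟨hl, hlj⟩)]
    · rw [if_neg hlj, if_neg (by rw [hS]; exact fun h => hlj (Finset.mem_inter.1 h).2)]
  have h2' : blockDeriv v j i x'' = blockDeriv v j i x' := by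
    rw [← hsymm x'' i j, ← hsymm x' i j, h2]
  have hnorm : ‖x' - z‖ ≤ ∑ l ∈ S, ‖x l - z l‖ := by
    have hdecomp : x' - z = ∑ l ∈ S,
        (WithLp.equiv 2 (∀ k, EuclideanSpace ℝ (Fin (d k)))).symm
          (Pi.single l (x l - z l)) := by
      refine PiLp.ext (fun l => ?_)
      have hl : (x' - z) l = x' l - z l := rfl
      have hr : (∑ k ∈ S, (WithLp.equiv 2 (∀ k, EuclideanSpace ℝ (Fin (d k)))).symm
          (Pi.single k (x k - z k))) l
          = ∑ k ∈ S, Pi.single k (x k - z k) l := by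
        rw [← Finset.sum_apply l S, WithLp.ofLp_sum]
        rfl
      rw [hl, hr, Finset.sum_pi_single]
      show (if l ∈ S then x l else z l) - z l = _
      by_cases hls : l ∈ S
      · rw [if_pos hls, if_pos hls]
      · rw [if_neg hls, if_neg hls, sub_self]
    rw [hdecomp]
    refine (norm_sum_le _ _).trans ?_
    refine Finset.sum_le_sum (fun l _ => ?_)
    exact (PiLp.norm_toLp_single 2 _ l _).le
  calc ‖blockDeriv v j i x - blockDeriv v j i z‖
      = ‖blockDeriv v j i x' - blockDeriv v j i z‖ := by rw [h1, h2']
    _ ≤ ‖fderiv ℝ v x' - fderiv ℝ v z‖ := norm_blockDeriv_sub_le hvd j i x' z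
    _ ≤ Hv * ‖x' - z‖ := hLip x' z
    _ ≤ Hv * ∑ l ∈ S, ‖x l - z l‖ := by
        exact mul_le_mul_of_nonneg_left hnorm hHv.le
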